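/- Let G be the complete graph on n vertices, with observations y_i ~ Bernoulli(p*_i) independent, p* ∈ [0,1]^n, s = ‖p*‖₀, and the one-bit TV denoiser p̂ computed with λ = (√2 ρ / n) log(4n³). Then there exists a numerical constant C such that, with probability at least 1 − 4/n, ‖p̂ − p*‖₂² ≤ C ( (‖Dp*‖₁ + s) / n ) log(n). -/

import Mathlib

open MeasureTheory ProbabilityTheory Finset Matrix

noncomputable section
namespace OneBit

/-- `D` is the edge–vertex incidence matrix of the undirected graph `G`:
rows indexed by edges `e = (i,j)` with `i < j`, carrying `1` at `min(i,j)` and `-1` at `max(i,j)`. -/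
def IsIncidenceMatrix {n m : ℕ} (G : SimpleGraph (Fin n)) (D : Matrix (Fin m) (Fin n) ℝ) : Prop :=
  ∃ ends : Fin m → Fin n × Fin n,
    Function.Injective ends ∧
    (∀ e, (ends e).1 < (ends e).2 ∧ G.Adj (ends e).1 (ends e).2) ∧
    (∀ i j : Fin n, i < j → G.Adj i j → ∃ e, ends e = (i, j)) ∧
    (∀ e k, D e k = if k = (ends e).1 then 1 else if k = (ends e).2 then -1 else 0)

/-- `Dd` is the Moore–Penrose pseudoinverse of `D`. -/
def IsMoorePenrose {n m : ℕ} (D : Matrix (Fin m) (Fin n) ℝ) (Dd : Matrix (Fin n) (Fin m) ℝ) : Prop :=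
  D * Dd * D = D ∧ Dd * D * Dd = Dd ∧ (D * Dd)ᵀ = D * Dd ∧ (Dd * D)ᵀ = Dd * D

/-- Inverse scaling factor `ρ = max_j ‖s_j‖₂`, the columns `s_j` of `D†`. -/
def rho {n m : ℕ} (Dd : Matrix (Fin n) (Fin m) ℝ) : ℝ :=
  ⨆ j : Fin m, Real.sqrt (∑ i, (Dd i j) ^ 2)

/-- Euclidean norm on `ℝⁿ`. -/
def l2 {n : ℕ} (p : Fin n → ℝ) : ℝ := Real.sqrt (∑ i, (p i) ^ 2)

/-- `‖(Dp)_T‖₁`, the ℓ₁ norm of `Dp` restricted to the coordinates in `T`. -/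
def tvOn {n m : ℕ} (D : Matrix (Fin m) (Fin n) ℝ) (T : Finset (Fin m)) (p : Fin n → ℝ) : ℝ :=
  ∑ e ∈ T, |D.mulVec p e|

/-- Compatibility factor `κ_T = inf_{p ∈ [0,1]^n, (Dp)_T ≠ 0} √|T| ‖p‖₂ / ‖(Dp)_T‖₁`. -/
def compat {n m : ℕ} (D : Matrix (Fin m) (Fin n) ℝ) (T : Finset (Fin m)) : ℝ :=
  sInf {x : ℝ | ∃ p : Fin n → ℝ, (∀ i, p i ∈ Set.Icc (0:ℝ) 1) ∧ tvOn D T p ≠ 0 ∧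
    x = Real.sqrt T.card * l2 p / tvOn D T p}

/-- `‖p‖₀`, the number of nonzero coordinates. -/
def supp0 {n : ℕ} (p : Fin n → ℝ) : ℕ := Nat.card {i // p i ≠ 0}

/-- `Y` has independent coordinates, with `Y ω i ~ Bernoulli(p i)` taking values in `{0,1}`. -/
def IsBernoulliFamily {Ω : Type*} [MeasurableSpace Ω] {n : ℕ} (μ : Measure Ω)
    (Y : Ω → Fin n → ℝ) (p : Fin n → ℝ) : Prop :=
  (∀ i, Measurable fun ω => Y ω i) ∧
  (∀ ω i, Y ω i = 0 ∨ Y ω i = 1) ∧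
  (∀ i, μ {ω | Y ω i = 1} = ENNReal.ofReal (p i)) ∧
  iIndepFun (fun i ω => Y ω i) μ

/-- The one-bit TV denoiser: `phat ∈ [0,1]^n` minimizes
`(1/n) Σᵢ (yᵢ - pᵢ)² + λ ‖Dp‖₁` over `p ∈ ℝⁿ`. -/
def IsTVDenoiser {n m : ℕ} (D : Matrix (Fin m) (Fin n) ℝ) (lam : ℝ)
    (y phat : Fin n → ℝ) : Prop :=
  (∀ i, phat i ∈ Set.Icc (0:ℝ) 1) ∧
  ∀ q : Fin n → ℝ,
    (1 / (n:ℝ)) * ∑ i, (y i - phat i) ^ 2 + lam * ∑ e, |D.mulVec phat e| ≤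
    (1 / (n:ℝ)) * ∑ i, (y i - q i) ^ 2 + lam * ∑ e, |D.mulVec q e|

section Aux
variable {Ω : Type} [MeasurableSpace Ω] {μ : Measure Ω}

lemma mp_unique {n m : ℕ} (A : Matrix (Fin m) (Fin n) ℝ) (B C : Matrix (Fin n) (Fin m) ℝ)
    (hB1 : A * B * A = A) (hB2 : B * A * B = B) (hB3 : (A * B)ᵀ = A * B) (hB4 : (B * A)ᵀ = B * A)
    (hC1 : A * C * A = A) (hC2 : C * A * C = C) (hC3 : (A * C)ᵀ = A * C) (hC4 : (C * A)ᵀ = C * A) :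
    B = C := by
  have hAt : Aᵀ = Aᵀ * (A * C) := by
    conv_lhs => rw [← hC1]
    rw [Matrix.transpose_mul, hC3]
  have hAB : A * B = A * C := by
    calc A * B = (A * B)ᵀ := hB3.symm
    _ = Bᵀ * Aᵀ := Matrix.transpose_mul _ _
    _ = Bᵀ * (Aᵀ * (A * C)) := by rw [← hAt]
    _ = (Bᵀ * Aᵀ) * (A * C) := by rw [Matrix.mul_assoc]
    _ = (A * B)ᵀ * (A * C) := by rw [Matrix.transpose_mul]
    _ = (A * B) * (A * C) := by rw [hB3]
    _ = (A * B * A) * C := by rw [← Matrix.mul_assoc]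
    _ = A * C := by rw [hB1]
  have hAt2 : Aᵀ = (C * A) * Aᵀ := by
    conv_lhs => rw [← hC1, Matrix.mul_assoc]
    rw [Matrix.transpose_mul, hC4]
  have hBA : B * A = C * A := by
    calc B * A = (B * A)ᵀ := hB4.symm
    _ = Aᵀ * Bᵀ := Matrix.transpose_mul _ _
    _ = ((C * A) * Aᵀ) * Bᵀ := by rw [← hAt2]
    _ = (C * A) * (Aᵀ * Bᵀ) := by rw [Matrix.mul_assoc]
    _ = (C * A) * (B * A)ᵀ := by rw [Matrix.transpose_mul]
    _ = (C * A) * (B * A) := by rw [hB4]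
    _ = C * (A * B * A) := by rw [Matrix.mul_assoc, ← Matrix.mul_assoc A B A]
    _ = C * A := by rw [hB1]
  calc B = B * A * B := hB2.symm
  _ = C * A * B := by rw [hBA]
  _ = C * (A * B) := by rw [Matrix.mul_assoc]
  _ = C * (A * C) := by rw [hAB]
  _ = C * A * C := by rw [Matrix.mul_assoc]
  _ = C := hC2

lemma pair_sum_identity {n : ℕ} (x z : Fin n → ℝ) :
    ∑ p ∈ Finset.univ.filter (fun p : Fin n × Fin n => p.1 < p.2), (x p.1 - x p.2) * (z p.1 - z p.2)
      = n * (∑ i, x i * z i) - (∑ i, x i) * (∑ i, z i) := by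
  have hfull : ∑ p : Fin n × Fin n, (x p.1 - x p.2) * (z p.1 - z p.2)
      = 2 * ((n : ℝ) * (∑ i, x i * z i) - (∑ i, x i) * (∑ i, z i)) := by
    rw [Fintype.sum_prod_type]
    simp only [mul_sub, sub_mul, Finset.sum_sub_distrib, Finset.sum_add_distrib,
      ← Finset.mul_sum, ← Finset.sum_mul, Finset.sum_const, Finset.card_univ,
      Fintype.card_fin, nsmul_eq_mul]
    have h3 : ∑ i, x i * ((n:ℝ) * z i) = (n:ℝ) * ∑ i, x i * z i := by
      rw [Finset.mul_sum]; exact Finset.sum_congr rfl fun i _ => by ring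
    rw [h3]; ring
  have hswap : ∑ p ∈ Finset.univ.filter (fun p : Fin n × Fin n => p.2 < p.1),
      (x p.1 - x p.2) * (z p.1 - z p.2)
      = ∑ p ∈ Finset.univ.filter (fun p : Fin n × Fin n => p.1 < p.2),
      (x p.1 - x p.2) * (z p.1 - z p.2) := by
    apply Finset.sum_nbij' (fun p => Prod.swap p) (fun p => Prod.swap p)
    · intro a ha; simp at ha ⊢; exact ha
    · intro a ha; simp at ha ⊢; exact ha
    · intro a _; simp
    · intro a _; simp
    · intro a _; simp [Prod.swap]; ring
  have hsplit := Finset.sum_filter_add_sum_filter_not (Finset.univ : Finset (Fin n × Fin n))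
    (fun p => p.1 < p.2) (fun p => (x p.1 - x p.2) * (z p.1 - z p.2))
  have hnot : ∑ p ∈ Finset.univ.filter (fun p : Fin n × Fin n => ¬ p.1 < p.2),
      (x p.1 - x p.2) * (z p.1 - z p.2)
      = ∑ p ∈ Finset.univ.filter (fun p : Fin n × Fin n => p.2 < p.1),
      (x p.1 - x p.2) * (z p.1 - z p.2) := by
    rw [← Finset.sum_filter_add_sum_filter_not
      (Finset.univ.filter (fun p : Fin n × Fin n => ¬ p.1 < p.2)) (fun p => p.2 < p.1)]
    rw [Finset.filter_filter, Finset.filter_filter]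
    have h1 : (Finset.univ.filter fun p : Fin n × Fin n => ¬ p.1 < p.2 ∧ p.2 < p.1)
        = Finset.univ.filter (fun p : Fin n × Fin n => p.2 < p.1) := by
      apply Finset.filter_congr; intro p _
      constructor
      · exact fun h => h.2
      · exact fun h => ⟨fun h2 => absurd (lt_trans h h2) (lt_irrefl _), h⟩
    have h2 : ∑ p ∈ (Finset.univ.filter fun p : Fin n × Fin n => ¬ p.1 < p.2 ∧ ¬ p.2 < p.1),
        (x p.1 - x p.2) * (z p.1 - z p.2) = 0 := by
      apply Finset.sum_eq_zero
      intro p hp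
      simp only [Finset.mem_filter] at hp
      have : p.1 = p.2 := le_antisymm (not_lt.mp hp.2.2) (not_lt.mp hp.2.1)
      rw [this]; ring
    rw [h1, h2, add_zero]
  rw [hnot, hswap] at hsplit
  have := hfull
  rw [← hsplit] at this
  linarith

variable {Ω : Type} [MeasurableSpace Ω] {μ : Measure Ω}

lemma int_of_bounded [IsFiniteMeasure μ] {f : Ω → ℝ} (hf : Measurable f) (c : ℝ)
    (h : ∀ ω, |f ω| ≤ c) : Integrable f μ :=
  (integrable_const c).mono' hf.aestronglyMeasurable (ae_of_all _ (fun ω => by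
    simpa using h ω))

lemma mgf_factor_bound [IsProbabilityMeasure μ] {X : Ω → ℝ} (hX : Measurable X)
    (hbd : ∀ ω, |X ω| ≤ 1) (hmean : ∫ ω, X ω ∂μ = 0) (t : ℝ) :
    mgf X μ t ≤ Real.exp (t ^ 2 / 2) := by
  have hptwise : ∀ ω, Real.exp (t * X ω) ≤
      (1 - X ω) / 2 * Real.exp (-t) + (1 + X ω) / 2 * Real.exp t := by
    intro ω
    have h1 : 0 ≤ (1 - X ω) / 2 := by have := (abs_le.mp (hbd ω)).2; linarith
    have h2 : 0 ≤ (1 + X ω) / 2 := by have := (abs_le.mp (hbd ω)).1; linarith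
    have h3 : (1 - X ω) / 2 + (1 + X ω) / 2 = 1 := by ring
    have := convexOn_exp.2 (Set.mem_univ (-t)) (Set.mem_univ t) h1 h2 h3
    have harg : -((1 - X ω) / 2 * t) + (1 + X ω) / 2 * t = t * X ω := by ring
    simpa [smul_eq_mul, harg] using this
  have hintX : Integrable X μ := int_of_bounded hX 1 hbd
  have hint1 : Integrable (fun ω => Real.exp (t * X ω)) μ :=
    int_of_bounded (by fun_prop) (Real.exp |t|) (fun ω => by
      rw [abs_of_nonneg (Real.exp_nonneg _)]
      apply Real.exp_le_exp.mpr
      calc t * X ω ≤ |t * X ω| := le_abs_self _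
      _ = |t| * |X ω| := abs_mul _ _
      _ ≤ |t| * 1 := mul_le_mul_of_nonneg_left (hbd ω) (abs_nonneg t)
      _ = |t| := mul_one _)
  have hint2 : Integrable (fun ω => (1 - X ω) / 2 * Real.exp (-t) + (1 + X ω) / 2 * Real.exp t) μ := by
    apply Integrable.add <;>
    · apply Integrable.mul_const
      apply Integrable.div_const
      first
      | exact (integrable_const 1).sub hintX
      | exact (integrable_const 1).add hintX
  have : mgf X μ t ≤ ∫ ω, ((1 - X ω) / 2 * Real.exp (-t) + (1 + X ω) / 2 * Real.exp t) ∂μ :=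
    integral_mono hint1 hint2 hptwise
  calc mgf X μ t ≤ _ := this
  _ = Real.cosh t := by
      have heq : ∀ ω, (1 - X ω) / 2 * Real.exp (-t) + (1 + X ω) / 2 * Real.exp t
          = (Real.exp t + Real.exp (-t)) / 2 + X ω * ((Real.exp t - Real.exp (-t)) / 2) :=
        fun ω => by ring
      rw [integral_congr_ae (ae_of_all _ heq),
        integral_add (integrable_const _) (hintX.mul_const _), integral_const,
        integral_mul_const, hmean]
      simp [Real.cosh_eq]
  _ ≤ Real.exp (t ^ 2 / 2) := by
      have := Real.cosh_le_exp_half_sq t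
      simpa using this

lemma integral_Y [IsProbabilityMeasure μ] {f : Ω → ℝ} (hf : Measurable f)
    (hval : ∀ ω, f ω = 0 ∨ f ω = 1) {c : ℝ} (hc : 0 ≤ c)
    (hmean : μ {ω | f ω = 1} = ENNReal.ofReal c) : ∫ ω, f ω ∂μ = c := by
  have hs : MeasurableSet {ω | f ω = 1} := hf (measurableSet_singleton 1)
  have hY : f = Set.indicator {ω | f ω = 1} (fun _ => (1:ℝ)) := by
    funext ω
    rcases hval ω with h | h
    · rw [h, Set.indicator_of_notMem]
      simp only [Set.mem_setOf_eq, h]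
      norm_num
    · rw [h, Set.indicator_of_mem]
      exact h
  rw [hY, integral_indicator_const (1:ℝ) hs, measureReal_def, hmean, ENNReal.toReal_ofReal hc]
  simp

lemma tail_bound [IsProbabilityMeasure μ]
    {n : ℕ} {Y : Ω → Fin n → ℝ} {p : Fin n → ℝ}
    (hmeas : ∀ i, Measurable fun ω => Y ω i)
    (hval : ∀ ω i, Y ω i = 0 ∨ Y ω i = 1)
    (hmean : ∀ i, μ {ω | Y ω i = 1} = ENNReal.ofReal (p i))
    (hp : ∀ i, p i ∈ Set.Icc (0:ℝ) 1)
    (hindep : iIndepFun (fun i ω => Y ω i) μ)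
    (T : Finset (Fin n)) (u t : ℝ) (ht : 0 ≤ t) :
    μ {ω | u < |∑ i ∈ T, (Y ω i - p i)|} ≤
      ENNReal.ofReal (2 * Real.exp (-t * u + T.card * t ^ 2 / 2)) := by
  set X : Fin n → Ω → ℝ := fun i ω => Y ω i - p i with hX
  have hXmeas : ∀ i, Measurable (X i) := fun i => (hmeas i).sub measurable_const
  have hXbd : ∀ i ω, |X i ω| ≤ 1 := by
    intro i ω
    have h1 := (hp i).1; have h2 := (hp i).2
    rcases hval ω i with h | h <;> simp [hX, h, abs_le] <;> constructor <;> linarith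
  have hXmean : ∀ i, ∫ ω, X i ω ∂μ = 0 := by
    intro i
    have : ∫ ω, Y ω i ∂μ = p i := integral_Y (hmeas i) (fun ω => hval ω i) (hp i).1 (hmean i)
    rw [hX]
    simp only
    rw [integral_sub (int_of_bounded (hmeas i) 1 ?_) (integrable_const _), this, integral_const]
    · simp
    · intro ω; rcases hval ω i with h | h <;> simp [h]
  have hindep' : iIndepFun X μ :=
    hindep.comp (fun i x => x - p i) (fun i => measurable_id.sub measurable_const)
  have hmgf : ∀ t' : ℝ, mgf (∑ i ∈ T, X i) μ t' ≤ Real.exp (T.card * t' ^ 2 / 2) := by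
    intro t'
    rw [hindep'.mgf_sum hXmeas T]
    calc ∏ i ∈ T, mgf (X i) μ t' ≤ ∏ _i ∈ T, Real.exp (t' ^ 2 / 2) := by
          apply Finset.prod_le_prod (fun i _ => mgf_nonneg)
          exact fun i _ => mgf_factor_bound (hXmeas i) (hXbd i) (hXmean i) t'
    _ = Real.exp (T.card * t' ^ 2 / 2) := by
          rw [Finset.prod_const, ← Real.exp_nat_mul]
          ring_nf
  have hSmeas : Measurable (∑ i ∈ T, X i) := by
    have : (∑ i ∈ T, X i) = fun ω => ∑ i ∈ T, X i ω := by
      funext ω; rw [Finset.sum_apply]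
    rw [this]
    exact Finset.measurable_sum T (fun i _ => hXmeas i)
  have hSbd : ∀ ω, |(∑ i ∈ T, X i) ω| ≤ T.card := by
    intro ω
    rw [Finset.sum_apply]
    calc |∑ i ∈ T, X i ω| ≤ ∑ i ∈ T, |X i ω| := Finset.abs_sum_le_sum_abs _ _
    _ ≤ ∑ _i ∈ T, (1:ℝ) := Finset.sum_le_sum (fun i _ => hXbd i ω)
    _ = T.card := by simp
  have hint : ∀ t' : ℝ, Integrable (fun ω => Real.exp (t' * (∑ i ∈ T, X i) ω)) μ := by
    intro t'
    apply int_of_bounded ((hSmeas.const_mul t').exp) (Real.exp (|t'| * T.card))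
    intro ω
    rw [abs_of_nonneg (Real.exp_nonneg _)]
    apply Real.exp_le_exp.mpr
    calc t' * (∑ i ∈ T, X i) ω ≤ |t' * (∑ i ∈ T, X i) ω| := le_abs_self _
    _ = |t'| * |(∑ i ∈ T, X i) ω| := abs_mul _ _
    _ ≤ |t'| * T.card := mul_le_mul_of_nonneg_left (hSbd ω) (abs_nonneg t')
  have hupper : (μ {ω | u ≤ (∑ i ∈ T, X i) ω}).toReal ≤
      Real.exp (-t * u + T.card * t ^ 2 / 2) := by
    calc (μ {ω | u ≤ (∑ i ∈ T, X i) ω}).toReal ≤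
        Real.exp (-t * u) * mgf (∑ i ∈ T, X i) μ t :=
          measure_ge_le_exp_mul_mgf u ht (hint t)
    _ ≤ Real.exp (-t * u) * Real.exp (T.card * t ^ 2 / 2) := by
          exact mul_le_mul_of_nonneg_left (hmgf t) (Real.exp_nonneg _)
    _ = Real.exp (-t * u + T.card * t ^ 2 / 2) := (Real.exp_add _ _).symm
  have hlower : (μ {ω | (∑ i ∈ T, X i) ω ≤ -u}).toReal ≤
      Real.exp (-t * u + T.card * t ^ 2 / 2) := by
    calc (μ {ω | (∑ i ∈ T, X i) ω ≤ -u}).toReal ≤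
        Real.exp (-(-t) * (-u)) * mgf (∑ i ∈ T, X i) μ (-t) :=
          measure_le_le_exp_mul_mgf (-u) (neg_nonpos.mpr ht) (hint (-t))
    _ ≤ Real.exp (-t * u) * Real.exp (T.card * t ^ 2 / 2) := by
          have h1 : -(-t) * (-u) = -t * u := by ring
          rw [h1]
          apply mul_le_mul_of_nonneg_left _ (Real.exp_nonneg _)
          have := hmgf (-t)
          simpa [neg_pow] using this
    _ = Real.exp (-t * u + T.card * t ^ 2 / 2) := (Real.exp_add _ _).symm
  have hsub : {ω | u < |∑ i ∈ T, (Y ω i - p i)|} ⊆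
      {ω | u ≤ (∑ i ∈ T, X i) ω} ∪ {ω | (∑ i ∈ T, X i) ω ≤ -u} := by
    intro ω hω
    simp only [Set.mem_setOf_eq] at hω
    have hS : (∑ i ∈ T, X i) ω = ∑ i ∈ T, (Y ω i - p i) := by
      rw [Finset.sum_apply]
    rcases abs_cases (∑ i ∈ T, (Y ω i - p i)) with ⟨h1, _⟩ | ⟨h1, _⟩
    · left; simp only [Set.mem_setOf_eq, hS]; linarith [hω.le, h1.symm.le]
    · right; simp only [Set.mem_setOf_eq, hS]; linarith [hω.le]
  calc μ {ω | u < |∑ i ∈ T, (Y ω i - p i)|} ≤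
      μ ({ω | u ≤ (∑ i ∈ T, X i) ω} ∪ {ω | (∑ i ∈ T, X i) ω ≤ -u}) := measure_mono hsub
  _ ≤ μ {ω | u ≤ (∑ i ∈ T, X i) ω} + μ {ω | (∑ i ∈ T, X i) ω ≤ -u} := measure_union_le _ _
  _ ≤ ENNReal.ofReal (Real.exp (-t * u + T.card * t ^ 2 / 2)) +
      ENNReal.ofReal (Real.exp (-t * u + T.card * t ^ 2 / 2)) := by
        gcongr <;>
        exact (ENNReal.le_ofReal_iff_toReal_le (measure_ne_top μ _) (Real.exp_nonneg _)).mpr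
          (by assumption)
  _ = ENNReal.ofReal (2 * Real.exp (-t * u + T.card * t ^ 2 / 2)) := by
        rw [← ENNReal.ofReal_add (Real.exp_nonneg _) (Real.exp_nonneg _)]
        ring_nf

end Aux


lemma arith_main {nR L logn A V1 V2 Cr X P Sd u Tc : ℝ}
    (h1 : nR * A ≤ 2 * L * (V1 - V2) + 2 * (nR * Cr))
    (h2 : nR * Cr = X + P)
    (h3 : X ≤ 2 * (V2 + V1))
    (h4 : P ≤ u * Sd)
    (h5 : Sd ^ 2 ≤ nR * A)
    (h6 : u ^ 2 = 4 * Tc * logn)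
    (h7 : 2 ≤ L) (h8 : L ≤ 5 * logn) (h9 : 1 ≤ logn)
    (h10 : 0 ≤ V1) (h11 : 0 ≤ V2) (h12 : 0 ≤ Tc) :
    nR * A ≤ 40 * logn * (V1 + Tc) := by
  have k1 : 2 * (u * Sd) ≤ 2 * u ^ 2 + Sd ^ 2 / 2 := by nlinarith [sq_nonneg (2 * u - Sd)]
  have k2 : 0 ≤ (2 * L - 4) * V2 := mul_nonneg (by linarith) h11
  have k3 : nR * A ≤ (4 * L + 8) * V1 + 4 * u ^ 2 := by nlinarith [h1, h2, h3, h4, h5, k1, k2]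
  have k4 : (4 * L + 8) * V1 ≤ 28 * logn * V1 :=
    mul_le_mul_of_nonneg_right (by linarith) h10
  have k5 : 0 ≤ logn * V1 := mul_nonneg (by linarith) h10
  have k6 : 0 ≤ logn * Tc := mul_nonneg (by linarith) h12
  nlinarith [k3, k4, k5, k6, h6]


set_option maxHeartbeats 3200000 in
/-- Risk bound for the complete graph (Case 2 of the discussion): there is a numerical
constant `C` such that for the one-bit TV denoiser on the complete graph with
`λ = (√2 ρ / n) log(4n³)`, with probability at least `1 - 4/n`,
`‖p̂ - p*‖₂² ≤ C ((‖Dp*‖₁ + s)/n) log(n)`. -/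


theorem complete_graph_risk_bound :
    ∃ C : ℝ, 0 < C ∧
    ∀ (n m : ℕ) (D : Matrix (Fin m) (Fin n) ℝ) (Dd : Matrix (Fin n) (Fin m) ℝ),
      IsIncidenceMatrix (⊤ : SimpleGraph (Fin n)) D → IsMoorePenrose D Dd →
    ∀ (Ω : Type) (_ : MeasurableSpace Ω) (μ : Measure Ω), IsProbabilityMeasure μ →
    ∀ (pstar : Fin n → ℝ), (∀ i, pstar i ∈ Set.Icc (0:ℝ) 1) →
    ∀ (Y : Ω → Fin n → ℝ), IsBernoulliFamily μ Y pstar →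
    ∀ (lam : ℝ), lam = Real.sqrt 2 * rho Dd / n * Real.log (4 * (n:ℝ) ^ 3) →
    ∀ (phat : Ω → Fin n → ℝ), (∀ ω, IsTVDenoiser D lam (Y ω) (phat ω)) →
    ENNReal.ofReal (1 - 4 / n) ≤
      μ {ω | ∑ i, (phat ω i - pstar i) ^ 2 ≤
        C * (((∑ e, |D.mulVec pstar e|) + (supp0 pstar)) / n) * Real.log n} := by
  classical
  refine ⟨40, by norm_num, ?_⟩
  intro n m D Dd hInc hMP Ω mΩ μ hProb pstar hpstar Y hY lam hlam phat hphat
  haveI := hProb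
  by_cases hn5 : n < 5
  · -- trivial small cases
    rcases Nat.eq_zero_or_pos n with hn0 | hn0
    · subst hn0
      have hset : {ω | ∑ i, (phat ω i - pstar i) ^ 2 ≤
          (40:ℝ) * (((∑ e, |D.mulVec pstar e|) + (supp0 pstar)) / (0:ℕ)) * Real.log (0:ℕ)}
          = Set.univ := by
        ext ω
        simp
      rw [hset]
      simp
    · have h1 : (1:ℝ) - 4 / n ≤ 0 := by
        have h2 : (1:ℝ) ≤ (n:ℝ) := by exact_mod_cast hn0
        have h3 : (n:ℝ) ≤ 4 := by exact_mod_cast Nat.lt_succ_iff.mp hn5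
        have : (1:ℝ) ≤ 4 / n := (one_le_div (by linarith)).mpr (by linarith)
        linarith
      rw [ENNReal.ofReal_eq_zero.mpr h1]
      exact zero_le
  push_neg at hn5
  have hn0 : (0:ℝ) < n := by
    have : (5:ℝ) ≤ n := by exact_mod_cast hn5
    linarith
  have hn5' : (5:ℝ) ≤ n := by exact_mod_cast hn5
  have hnne : (n:ℝ) ≠ 0 := ne_of_gt hn0
  obtain ⟨ends, hinj, hord, hcov, hD⟩ := hInc
  obtain ⟨hmeasY, hvalY, hmeanY, hindepY⟩ := hY
  -- bijection between edges and ordered pairs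
  have h_bij : ∀ g : Fin n → Fin n → ℝ, ∑ e, g (ends e).1 (ends e).2
      = ∑ q ∈ Finset.univ.filter (fun q : Fin n × Fin n => q.1 < q.2), g q.1 q.2 := by
    intro g
    apply Finset.sum_nbij (i := ends)
    · intro e _
      exact Finset.mem_filter.mpr ⟨Finset.mem_univ _, (hord e).1⟩
    · exact fun a _ b _ h => hinj h
    · intro q hq
      simp only [Finset.coe_filter, Set.mem_setOf_eq] at hq
      obtain ⟨e, he⟩ := hcov q.1 q.2 hq.2 ((SimpleGraph.top_adj _ _).mpr (ne_of_lt hq.2))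
      exact ⟨e, by simp, by rw [he]⟩
    · intro e _
      rfl
  -- mulVec formula
  have h_mulVec : ∀ (x : Fin n → ℝ) e, D.mulVec x e = x (ends e).1 - x (ends e).2 := by
    intro x e
    have hne : (ends e).1 ≠ (ends e).2 := ne_of_lt (hord e).1
    have hterm : ∀ k, D e k * x k
        = (if (ends e).1 = k then x k else 0) + (if (ends e).2 = k then -x k else 0) := by
      intro k
      rw [hD]
      by_cases h1 : k = (ends e).1
      · subst h1
        simp [hne.symm, Ne.symm hne]
      · by_cases h2 : k = (ends e).2
        · subst h2
          simp [h1, Ne.symm h1]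
        · simp [h1, h2, Ne.symm h1, Ne.symm h2]
    show ∑ k, D e k * x k = _
    rw [Finset.sum_congr rfl (fun k _ => hterm k), Finset.sum_add_distrib,
      Finset.sum_ite_eq, Finset.sum_ite_eq]
    simp [sub_eq_add_neg]
  -- bilinear identity
  have h_bilin : ∀ x z : Fin n → ℝ, ∑ e, D.mulVec x e * D.mulVec z e
      = n * (∑ i, x i * z i) - (∑ i, x i) * (∑ i, z i) := by
    intro x z
    have := h_bij (fun a b => (x a - x b) * (z a - z b))
    simp_rw [h_mulVec]
    rw [this]
    exact pair_sum_identity x z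
  -- row sums vanish
  have hrow : ∀ e, ∑ k, D e k = 0 := by
    intro e
    have h := h_mulVec (fun _ => (1:ℝ)) e
    simp only [Matrix.mulVec, dotProduct, mul_one, sub_self] at h
    exact h
  -- D^T D = n I - J
  have hDtD : Dᵀ * D = (n:ℝ) • 1 - Matrix.of (fun _ _ : Fin n => (1:ℝ)) := by
    ext k l
    have hs := h_bilin (fun i => if i = k then (1:ℝ) else 0) (fun i => if i = l then (1:ℝ) else 0)
    have hcol : ∀ (j : Fin n) e, D.mulVec (fun i => if i = j then (1:ℝ) else 0) e = D e j := by
      intro j e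
      show ∑ i, D e i * (if i = j then (1:ℝ) else 0) = D e j
      simp [mul_ite, Finset.sum_ite_eq']
    simp_rw [hcol] at hs
    have h1 : ∑ i, (if i = k then (1:ℝ) else 0) * (if i = l then (1:ℝ) else 0)
        = if k = l then 1 else 0 := by
      rw [Finset.sum_eq_single k]
      · simp
      · intro b _ hb
        simp [hb]
      · intro h
        exact absurd (Finset.mem_univ k) h
    have h2 : ∑ i, (if i = k then (1:ℝ) else 0) = 1 := by simp
    have h3 : ∑ i, (if i = l then (1:ℝ) else 0) = 1 := by simp
    rw [h1, h2, h3] at hs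
    rw [Matrix.mul_apply]
    simp only [Matrix.transpose_apply]
    rw [hs]
    by_cases h : k = l <;>
      simp [h, Matrix.sub_apply, Matrix.smul_apply, Matrix.one_apply, Matrix.of_apply]
  have hDJ : D * Matrix.of (fun _ _ : Fin n => (1:ℝ)) = 0 := by
    ext e k
    simp [Matrix.mul_apply, hrow e]
  have hJDt : Matrix.of (fun _ _ : Fin n => (1:ℝ)) * Dᵀ = 0 := by
    ext k e
    simp [Matrix.mul_apply, Matrix.transpose_apply, hrow e]
  -- the pseudoinverse is D^T / n
  have hB : IsMoorePenrose D ((n:ℝ)⁻¹ • Dᵀ) := by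
    refine ⟨?_, ?_, ?_, ?_⟩
    · calc D * ((n:ℝ)⁻¹ • Dᵀ) * D = (n:ℝ)⁻¹ • (D * (Dᵀ * D)) := by
            rw [Matrix.mul_smul, Matrix.smul_mul, Matrix.mul_assoc]
      _ = (n:ℝ)⁻¹ • ((n:ℝ) • D) := by
            rw [hDtD, Matrix.mul_sub, hDJ, sub_zero, Matrix.mul_smul, Matrix.mul_one]
      _ = D := by rw [smul_smul, inv_mul_cancel₀ hnne, one_smul]
    · calc ((n:ℝ)⁻¹ • Dᵀ) * D * ((n:ℝ)⁻¹ • Dᵀ)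
          = (n:ℝ)⁻¹ • ((n:ℝ)⁻¹ • ((Dᵀ * D) * Dᵀ)) := by
            rw [Matrix.smul_mul, Matrix.smul_mul, Matrix.mul_smul]
      _ = (n:ℝ)⁻¹ • ((n:ℝ)⁻¹ • ((n:ℝ) • Dᵀ)) := by
            rw [hDtD, Matrix.sub_mul, hJDt, sub_zero, Matrix.smul_mul, Matrix.one_mul]
      _ = (n:ℝ)⁻¹ • Dᵀ := by
            rw [smul_smul, smul_smul]
            congr 1
            field_simp
    · rw [Matrix.mul_smul, Matrix.transpose_smul, Matrix.transpose_mul,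
        Matrix.transpose_transpose]
    · rw [Matrix.smul_mul, Matrix.transpose_smul, Matrix.transpose_mul,
        Matrix.transpose_transpose]
  have hDd : Dd = (n:ℝ)⁻¹ • Dᵀ :=
    mp_unique D Dd ((n:ℝ)⁻¹ • Dᵀ) hMP.1 hMP.2.1 hMP.2.2.1 hMP.2.2.2 hB.1 hB.2.1 hB.2.2.1 hB.2.2.2
  -- rho = sqrt 2 / n
  have hm0 : Nonempty (Fin m) := by
    have h01 : (⟨0, by omega⟩ : Fin n) < ⟨1, by omega⟩ := by simp [Fin.lt_def]
    obtain ⟨e, _⟩ := hcov ⟨0, by omega⟩ ⟨1, by omega⟩ h01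
      ((SimpleGraph.top_adj _ _).mpr (ne_of_lt h01))
    exact ⟨e⟩
  have hcolsq : ∀ e, ∑ i, (Dd i e) ^ 2 = 2 / (n:ℝ) ^ 2 := by
    intro e
    have hne : (ends e).1 ≠ (ends e).2 := ne_of_lt (hord e).1
    have hterm : ∀ i, (D e i) ^ 2
        = (if (ends e).1 = i then (1:ℝ) else 0) + (if (ends e).2 = i then 1 else 0) := by
      intro i
      rw [hD]
      by_cases h1 : i = (ends e).1
      · subst h1
        simp [hne.symm, Ne.symm hne]
      · by_cases h2 : i = (ends e).2
        · subst h2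
          simp [h1, Ne.symm h1]
        · simp [h1, h2, Ne.symm h1, Ne.symm h2]
    have hsum : ∑ i, (D e i) ^ 2 = 2 := by
      rw [Finset.sum_congr rfl (fun i _ => hterm i), Finset.sum_add_distrib,
        Finset.sum_ite_eq, Finset.sum_ite_eq]
      simp
      try norm_num
    rw [hDd]
    simp only [Matrix.smul_apply, Matrix.transpose_apply, smul_eq_mul, mul_pow]
    rw [← Finset.mul_sum, hsum]
    field_simp
  have hrho : rho Dd = Real.sqrt 2 / n := by
    unfold rho
    have : (fun j : Fin m => Real.sqrt (∑ i, (Dd i j) ^ 2)) = fun _ => Real.sqrt 2 / n := by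
      funext j
      rw [hcolsq j]
      rw [Real.sqrt_div (by norm_num : (0:ℝ) ≤ 2), Real.sqrt_sq hn0.le]
    rw [this]
    exact ciSup_const
  -- lambda formula
  have hlam2 : lam = 2 * Real.log (4 * (n:ℝ) ^ 3) / (n:ℝ) ^ 2 := by
    rw [hlam, hrho]
    rw [show Real.sqrt 2 * (Real.sqrt 2 / (n:ℝ)) / (n:ℝ) * Real.log (4 * (n:ℝ) ^ 3)
        = (Real.sqrt 2 * Real.sqrt 2) * Real.log (4 * (n:ℝ) ^ 3) / (n:ℝ) ^ 2 from by ring,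
      Real.mul_self_sqrt (by norm_num : (0:ℝ) ≤ 2)]
  set L := Real.log (4 * (n:ℝ) ^ 3) with hLdef
  have hexp1 : Real.exp 1 < 2.7182818286 := Real.exp_one_lt_d9
  have hexp2 : Real.exp 2 < 9 := by
    have h : Real.exp 2 = Real.exp 1 * Real.exp 1 := by
      rw [← Real.exp_add]; norm_num
    nlinarith [Real.exp_pos 1]
  have hcube : (125:ℝ) ≤ (n:ℝ) ^ 3 := by
    have := pow_le_pow_left₀ (by norm_num : (0:ℝ) ≤ 5) hn5' 3
    norm_num at this
    linarith only [this]
  have hL2 : 2 ≤ L := by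
    rw [hLdef]
    exact (Real.le_log_iff_exp_le (by positivity)).mpr (by linarith only [hexp2, hcube])
  have hlog1 : 1 ≤ Real.log n := by
    exact (Real.le_log_iff_exp_le hn0).mpr (by linarith only [hexp1, hn5'])
  have hL5 : L ≤ 5 * Real.log n := by
    rw [hLdef, Real.log_mul (by norm_num) (by positivity), Real.log_pow]
    have h4 : Real.log 4 ≤ Real.log ((n:ℝ) ^ 2) :=
      (Real.log_le_log_iff (by norm_num) (by positivity)).mpr (by nlinarith [hn5'])
    rw [Real.log_pow] at h4
    push_cast at h4 ⊢
    linarith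
  have hlognn : 0 ≤ Real.log n := by linarith only [hlog1]
  -- support set
  set T := Finset.univ.filter (fun i => pstar i ≠ 0) with hT
  have hsupp : ((supp0 pstar : ℕ) : ℝ) = ((T.card : ℕ) : ℝ) := by
    have : supp0 pstar = T.card := by
      rw [supp0, Nat.card_eq_fintype_card, hT]
      exact Fintype.card_subtype _
    rw [this]
  set u := Real.sqrt (4 * T.card * Real.log n) with hu
  have hu0 : 0 ≤ u := Real.sqrt_nonneg _
  have hu2 : u ^ 2 = 4 * T.card * Real.log n := Real.sq_sqrt (by positivity)
  -- the good event
  set Good := {ω | |∑ i ∈ T, (Y ω i - pstar i)| ≤ u ∧ ∀ i, pstar i = 0 → Y ω i = 0}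
    with hGoodDef
  -- probability of the bad events
  have hBad1 : μ {ω | u < |∑ i ∈ T, (Y ω i - pstar i)|} ≤ ENNReal.ofReal (2 / (n:ℝ) ^ 2) := by
    by_cases hs0 : T.card = 0
    · have hTe : T = ∅ := Finset.card_eq_zero.mp hs0
      have hempty : {ω | u < |∑ i ∈ T, (Y ω i - pstar i)|} = ∅ := by
        ext ω
        simp only [Set.mem_setOf_eq, Set.mem_empty_iff_false, iff_false, not_lt, hTe,
          Finset.sum_empty, abs_zero]
        exact hu0
      rw [hempty]
      simp
    · have hs1 : (1:ℝ) ≤ T.card := by exact_mod_cast Nat.one_le_iff_ne_zero.mpr hs0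
      have hspos : (0:ℝ) < T.card := by linarith only [hs1]
      have ht0 : 0 ≤ u / T.card := div_nonneg hu0 hspos.le
      have hcne : ((T.card : ℕ) : ℝ) ≠ 0 := ne_of_gt hspos
      refine le_trans (tail_bound hmeasY hvalY hmeanY hpstar hindepY T u (u / T.card) ht0) ?_
      apply ENNReal.ofReal_le_ofReal
      have harg : -(u / (T.card:ℝ)) * u + (T.card:ℝ) * (u / T.card) ^ 2 / 2
          = -(u ^ 2) / (2 * T.card) := by
        field_simp [hcne]
        ring
      rw [harg, hu2]
      have harg2 : -(4 * (T.card:ℝ) * Real.log n) / (2 * T.card) = -(2 * Real.log n) := by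
        field_simp [hcne]
        ring
      rw [harg2]
      have hexp3 : Real.exp (-(2 * Real.log n)) = ((n:ℝ) ^ 2)⁻¹ := by
        rw [show -(2 * Real.log n) = Real.log (((n:ℝ) ^ 2)⁻¹) by
          rw [Real.log_inv, Real.log_pow]
          push_cast
          ring]
        exact Real.exp_log (by positivity)
      rw [hexp3, div_eq_mul_inv]
  have hBad2 : μ {ω | ¬ ∀ i, pstar i = 0 → Y ω i = 0} = 0 := by
    have hsub : {ω | ¬ ∀ i, pstar i = 0 → Y ω i = 0}
        ⊆ ⋃ i, {ω | pstar i = 0 ∧ Y ω i = 1} := by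
      intro ω hω
      simp only [Set.mem_setOf_eq, not_forall] at hω
      obtain ⟨i, hi, hne⟩ := hω
      rcases hvalY ω i with h | h
      · exact absurd h hne
      · exact Set.mem_iUnion.mpr ⟨i, hi, h⟩
    apply measure_mono_null hsub
    apply measure_iUnion_null
    intro i
    by_cases hp0 : pstar i = 0
    · have h0 : μ {ω | Y ω i = 1} = 0 := by
        rw [hmeanY i, hp0, ENNReal.ofReal_zero]
      apply measure_mono_null _ h0
      intro ω hω
      exact hω.2
    · have : {ω | pstar i = 0 ∧ Y ω i = 1} = ∅ := by
        ext ω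
        simp only [Set.mem_setOf_eq, Set.mem_empty_iff_false, iff_false]
        exact fun h => hp0 h.1
      rw [this]
      exact measure_empty
  have hGoodc : μ Goodᶜ ≤ ENNReal.ofReal (4 / n) := by
    have hsub : Goodᶜ ⊆ {ω | u < |∑ i ∈ T, (Y ω i - pstar i)|}
        ∪ {ω | ¬ ∀ i, pstar i = 0 → Y ω i = 0} := by
      intro ω hω
      simp only [hGoodDef, Set.mem_compl_iff, Set.mem_setOf_eq, not_and] at hω
      by_cases h1 : |∑ i ∈ T, (Y ω i - pstar i)| ≤ u
      · exact Or.inr (hω h1)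
      · exact Or.inl (not_le.mp h1)
    calc μ Goodᶜ ≤ μ ({ω | u < |∑ i ∈ T, (Y ω i - pstar i)|}
        ∪ {ω | ¬ ∀ i, pstar i = 0 → Y ω i = 0}) := measure_mono hsub
    _ ≤ μ {ω | u < |∑ i ∈ T, (Y ω i - pstar i)|}
        + μ {ω | ¬ ∀ i, pstar i = 0 → Y ω i = 0} := measure_union_le _ _
    _ ≤ ENNReal.ofReal (2 / (n:ℝ) ^ 2) + 0 := add_le_add hBad1 (le_of_eq hBad2)
    _ = ENNReal.ofReal (2 / (n:ℝ) ^ 2) := add_zero _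
    _ ≤ ENNReal.ofReal (4 / n) := by
        apply ENNReal.ofReal_le_ofReal
        rw [div_le_div_iff₀ (by positivity) hn0]
        nlinarith [hn5']
  -- the deterministic implication
  have hdet : Good ⊆ {ω | ∑ i, (phat ω i - pstar i) ^ 2 ≤
      40 * (((∑ e, |D.mulVec pstar e|) + (supp0 pstar)) / n) * Real.log n} := by
    intro ω hω
    obtain ⟨hSle, hzero⟩ := hω
    simp only [Set.mem_setOf_eq]
    obtain ⟨hq01, hden⟩ := hphat ω
    have hden1 := hden pstar
    set qh := phat ω with hqh
    set V1 := ∑ e, |D.mulVec pstar e| with hV1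
    set V2 := ∑ e, |D.mulVec qh e| with hV2
    have hV1nn : 0 ≤ V1 := Finset.sum_nonneg fun e _ => abs_nonneg _
    have hV2nn : 0 ≤ V2 := Finset.sum_nonneg fun e _ => abs_nonneg _
    set A := ∑ i, (qh i - pstar i) ^ 2 with hA
    have hAnn : 0 ≤ A := Finset.sum_nonneg fun i _ => sq_nonneg _
    set Cr := ∑ i, (Y ω i - pstar i) * (qh i - pstar i) with hCr
    have hexpand : ∑ i, (Y ω i - qh i) ^ 2 = ∑ i, (Y ω i - pstar i) ^ 2 - 2 * Cr + A := by
      rw [hCr, hA, Finset.mul_sum, ← Finset.sum_sub_distrib, ← Finset.sum_add_distrib]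
      exact Finset.sum_congr rfl fun i _ => by ring
    have hn2lam : (n:ℝ) ^ 2 * lam = 2 * L := by
      rw [hlam2, hLdef, mul_comm]
      exact div_mul_cancel₀ _ (by positivity)
    have hmul := mul_le_mul_of_nonneg_left hden1 (by positivity : (0:ℝ) ≤ (n:ℝ) ^ 2)
    have hsimp : ∀ X V : ℝ, (n:ℝ) ^ 2 * (1 / (n:ℝ) * X + lam * V)
        = (n:ℝ) * X + ((n:ℝ) ^ 2 * lam) * V := by
      intro X V
      field_simp
    rw [hsimp, hsimp, hn2lam, hexpand] at hmul
    have hkeyn : (n:ℝ) * A ≤ 2 * L * (V1 - V2) + 2 * ((n:ℝ) * Cr) := by linarith only [hmul]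
    -- noise decomposition
    have hbil := h_bilin (fun i => Y ω i - pstar i) (fun i => qh i - pstar i)
    have hepsbd : ∀ i, |Y ω i - pstar i| ≤ 1 := by
      intro i
      have h1 := (hpstar i).1
      have h2 := (hpstar i).2
      rw [abs_le]
      rcases hvalY ω i with h | h <;> rw [h] <;> constructor <;> linarith only [h1, h2]
    have hDe_bd : ∀ e, |D.mulVec (fun i => Y ω i - pstar i) e| ≤ 2 := by
      intro e
      rw [h_mulVec]
      calc |(Y ω (ends e).1 - pstar (ends e).1) - (Y ω (ends e).2 - pstar (ends e).2)|
          ≤ |Y ω (ends e).1 - pstar (ends e).1| + |Y ω (ends e).2 - pstar (ends e).2| :=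
            abs_sub _ _
      _ ≤ 2 := by linarith only [hepsbd (ends e).1, hepsbd (ends e).2]
    have hDdelta : ∀ e, |D.mulVec (fun i => qh i - pstar i) e|
        ≤ |D.mulVec qh e| + |D.mulVec pstar e| := by
      intro e
      rw [h_mulVec, h_mulVec, h_mulVec]
      calc |(qh (ends e).1 - pstar (ends e).1) - (qh (ends e).2 - pstar (ends e).2)|
          = |(qh (ends e).1 - qh (ends e).2) - (pstar (ends e).1 - pstar (ends e).2)| := by
            ring_nf
      _ ≤ |qh (ends e).1 - qh (ends e).2| + |pstar (ends e).1 - pstar (ends e).2| := abs_sub _ _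
    have hcross : ∑ e, D.mulVec (fun i => Y ω i - pstar i) e
        * D.mulVec (fun i => qh i - pstar i) e ≤ 2 * (V2 + V1) := by
      calc ∑ e, D.mulVec (fun i => Y ω i - pstar i) e * D.mulVec (fun i => qh i - pstar i) e
          ≤ ∑ e, 2 * (|D.mulVec qh e| + |D.mulVec pstar e|) := by
            apply Finset.sum_le_sum
            intro e _
            calc D.mulVec (fun i => Y ω i - pstar i) e * D.mulVec (fun i => qh i - pstar i) e
                ≤ |D.mulVec (fun i => Y ω i - pstar i) e * D.mulVec (fun i => qh i - pstar i) e| :=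
                  le_abs_self _
            _ = |D.mulVec (fun i => Y ω i - pstar i) e| * |D.mulVec (fun i => qh i - pstar i) e| :=
                  abs_mul _ _
            _ ≤ 2 * (|D.mulVec qh e| + |D.mulVec pstar e|) :=
                  mul_le_mul (hDe_bd e) (hDdelta e) (abs_nonneg _) (by norm_num)
      _ = 2 * (V2 + V1) := by
            rw [← Finset.mul_sum, Finset.sum_add_distrib]
    have hSeq : ∑ i, (Y ω i - pstar i) = ∑ i ∈ T, (Y ω i - pstar i) := by
      symm
      apply Finset.sum_subset (Finset.subset_univ T)
      intro i _ hiT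
      have hp0 : pstar i = 0 := by
        by_contra hne
        exact hiT (Finset.mem_filter.mpr ⟨Finset.mem_univ _, hne⟩)
      rw [hp0, hzero i hp0, sub_zero]
    have habsS : |∑ i, (Y ω i - pstar i)| ≤ u := by
      rw [hSeq]
      exact hSle
    have hCS : (∑ i, (qh i - pstar i)) ^ 2 ≤ (n:ℝ) * A := by
      have h := sq_sum_le_card_mul_sum_sq (s := (Finset.univ : Finset (Fin n)))
        (f := fun i => qh i - pstar i)
      simpa [Finset.card_univ, hA] using h
    have hcross2 : (n:ℝ) * Cr = (∑ e, D.mulVec (fun i => Y ω i - pstar i) e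
        * D.mulVec (fun i => qh i - pstar i) e)
        + (∑ i, (Y ω i - pstar i)) * (∑ i, (qh i - pstar i)) := by
      rw [hbil, hCr]
      ring
    have hprod : (∑ i, (Y ω i - pstar i)) * (∑ i, (qh i - pstar i))
        ≤ u * |∑ i, (qh i - pstar i)| := by
      calc (∑ i, (Y ω i - pstar i)) * (∑ i, (qh i - pstar i))
          ≤ |(∑ i, (Y ω i - pstar i)) * (∑ i, (qh i - pstar i))| := le_abs_self _
      _ = |∑ i, (Y ω i - pstar i)| * |∑ i, (qh i - pstar i)| := abs_mul _ _
      _ ≤ u * |∑ i, (qh i - pstar i)| := mul_le_mul_of_nonneg_right habsS (abs_nonneg _)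
    have hCS2 : |∑ i, (qh i - pstar i)| ^ 2 ≤ (n:ℝ) * A := by
      rw [sq_abs]
      exact hCS
    have hfin2 : (n:ℝ) * A ≤ 40 * Real.log n * (V1 + T.card) :=
      arith_main hkeyn hcross2 hcross hprod hCS2 hu2 hL2 hL5 hlog1 hV1nn hV2nn
        (Nat.cast_nonneg _)
    rw [hsupp]
    have hgoal : 40 * ((V1 + ((T.card : ℕ) : ℝ)) / n) * Real.log n
        = (40 * Real.log n * (V1 + T.card)) / n := by ring
    rw [hgoal, le_div_iff₀ hn0]
    linarith only [hfin2]
  -- conclusion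
  refine le_trans ?_ (measure_mono hdet)
  have h2 : 1 ≤ μ Good + ENNReal.ofReal (4 / n) := by
    calc (1 : ENNReal) = μ Set.univ := measure_univ.symm
    _ = μ (Good ∪ Goodᶜ) := by rw [Set.union_compl_self]
    _ ≤ μ Good + μ Goodᶜ := measure_union_le _ _
    _ ≤ μ Good + ENNReal.ofReal (4 / n) := add_le_add_right hGoodc _
  calc ENNReal.ofReal (1 - 4 / n) = 1 - ENNReal.ofReal (4 / n) := by
        rw [ENNReal.ofReal_sub 1 (by positivity), ENNReal.ofReal_one]
  _ ≤ μ Good := tsub_le_iff_right.mpr h2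


end OneBit
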